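/- The formula [f]·σ = (∏_{1 ≤ i ≤ l} ε(σ|_{(f∘σ)^{-1}(i)}))·[f∘σ], where σ|_{(f∘σ)^{-1}(i)} denotes the restriction of σ to a bijection (f∘σ)^{-1}(i) → σ((f∘σ)^{-1}(i)) viewed as a permutation via the order-preserving identifications of both sets with {1,…,|(f∘σ)^{-1}(i)|}, defines a right action of the symmetric group S_q on the free 𝕜-module 𝕜[Surj(q,l)] with basis the surjections f : {1,…,q} → {1,…,l}. -/

import Mathlib

/-- The set of surjections `{1,…,q} → {1,…,l}`. -/
def Surj (q l : ℕ) : Type := {f : Fin q → Fin l // Function.Surjective f}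

/-- The sign `ε(σ|_{(f∘σ)^{-1}(i)})` of the restriction of `σ` to a bijection
`(f∘σ)^{-1}(i) → f^{-1}(i) = σ((f∘σ)^{-1}(i))`, viewed as a permutation of
`Fin |(f∘σ)^{-1}(i)|` via the order-preserving identifications of source and target with an
initial segment of `ℕ` (given by `Finset.orderIsoOfFin`). -/
noncomputable def restrictSign {q l : ℕ} (f : Fin q → Fin l) (σ : Equiv.Perm (Fin q))
    (i : Fin l) : ℤˣ :=
  Equiv.Perm.sign
    (((Finset.univ.filter fun x => f (σ x) = i).orderIsoOfFin rfl).toEquiv.trans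
      ((σ.subtypeEquiv
          (p := fun x => x ∈ Finset.univ.filter fun x => f (σ x) = i)
          (q := fun x => x ∈ Finset.univ.filter fun x => f x = i)
          (fun a => by simp)).trans
        (((Finset.univ.filter fun x => f x = i).orderIsoOfFin
          (by
            have := Fintype.card_congr
              (σ.subtypeEquiv
                (p := fun x => x ∈ Finset.univ.filter fun x => f (σ x) = i)
                (q := fun x => x ∈ Finset.univ.filter fun x => f x = i)
                (fun a => by simp))
            simpa [Fintype.card_subtype] using this.symm)).toEquiv.symm)))

section Aux

variable {q : ℕ}

variable {q : ℕ}

/-- perm of `Fin s.card` induced by an equiv of subtypes via order isos. -/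
noncomputable def permOf (s t : Finset (Fin q)) (h : t.card = s.card)
    (e : {x // x ∈ s} ≃ {x // x ∈ t}) : Equiv.Perm (Fin s.card) :=
  (s.orderIsoOfFin rfl).toEquiv.trans (e.trans ((t.orderIsoOfFin h).toEquiv.symm))

lemma permOf_trans (s t u : Finset (Fin q)) (hst : t.card = s.card) (htu : u.card = t.card)
    (hsu : u.card = s.card) (e₁ : {x // x ∈ s} ≃ {x // x ∈ t}) (e₂ : {x // x ∈ t} ≃ {x // x ∈ u}) :
    permOf s u hsu (e₁.trans e₂) =
      (permOf s t hst e₁).trans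
        ((Fin.castOrderIso hst).toEquiv.permCongr (permOf t u htu e₂)) := by
  have h1 : (t.orderIsoOfFin hst) = ((Fin.castOrderIso hst).symm.trans (t.orderIsoOfFin rfl)) :=
    Subsingleton.elim _ _
  have h2 : (u.orderIsoOfFin hsu) = ((Fin.castOrderIso hst).symm.trans (u.orderIsoOfFin htu)) :=
    Subsingleton.elim _ _
  ext x
  simp [permOf, h1, h2, Equiv.permCongr, Equiv.permCongr_apply]

lemma permOf_sign (s t u : Finset (Fin q)) (hst : t.card = s.card) (htu : u.card = t.card)
    (hsu : u.card = s.card) (e₁ : {x // x ∈ s} ≃ {x // x ∈ t}) (e₂ : {x // x ∈ t} ≃ {x // x ∈ u}) :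
    Equiv.Perm.sign (permOf s u hsu (e₁.trans e₂)) =
      Equiv.Perm.sign (permOf s t hst e₁) * Equiv.Perm.sign (permOf t u htu e₂) := by
  rw [permOf_trans s t u hst htu hsu e₁ e₂]
  have : (permOf s t hst e₁).trans
        ((Fin.castOrderIso hst).toEquiv.permCongr (permOf t u htu e₂)) =
      ((Fin.castOrderIso hst).toEquiv.permCongr (permOf t u htu e₂)) * (permOf s t hst e₁) := rfl
  rw [this, map_mul, Equiv.Perm.sign_permCongr, mul_comm]


variable {l : ℕ}


lemma card_eq (f : Fin q → Fin l) (σ : Equiv.Perm (Fin q)) (i : Fin l) :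
    (Finset.univ.filter fun x => f x = i).card =
      (Finset.univ.filter fun x => f (σ x) = i).card := by
  have := Fintype.card_congr
    (σ.subtypeEquiv
      (p := fun x => x ∈ Finset.univ.filter fun x => f (σ x) = i)
      (q := fun x => x ∈ Finset.univ.filter fun x => f x = i)
      (fun a => by simp))
  simpa [Fintype.card_subtype] using this.symm

lemma restrictSign_eq (f : Fin q → Fin l) (σ : Equiv.Perm (Fin q)) (i : Fin l) :
    restrictSign f σ i =
      Equiv.Perm.sign (permOf (Finset.univ.filter fun x => f (σ x) = i)
        (Finset.univ.filter fun x => f x = i) (card_eq f σ i)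
        (σ.subtypeEquiv (fun a => by simp))) := rfl

lemma restrictSign_one (f : Fin q → Fin l) (i : Fin l) : restrictSign f 1 i = 1 := by
  rw [restrictSign_eq]
  have : permOf (Finset.univ.filter fun x => f ((1 : Equiv.Perm (Fin q)) x) = i)
      (Finset.univ.filter fun x => f x = i) (card_eq f 1 i)
      ((1 : Equiv.Perm (Fin q)).subtypeEquiv (fun a => Iff.rfl)) = Equiv.refl _ := by
    show permOf (Finset.univ.filter fun x => f x = i) (Finset.univ.filter fun x => f x = i) rfl
      (Equiv.refl _) = Equiv.refl _
    ext x
    simp [permOf, Equiv.subtypeEquiv]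
  rw [this]
  exact Equiv.Perm.sign_one

lemma restrictSign_mul (f : Fin q → Fin l) (σ τ : Equiv.Perm (Fin q)) (i : Fin l) :
    restrictSign f (σ * τ) i = restrictSign f σ i * restrictSign (f ∘ σ) τ i := by
  have h1 : restrictSign f (σ * τ) i =
      Equiv.Perm.sign (permOf (Finset.univ.filter fun x => f (σ (τ x)) = i)
        (Finset.univ.filter fun x => f x = i) (card_eq f (σ * τ) i)
        (((τ.subtypeEquiv (p := fun x => x ∈ Finset.univ.filter fun x => f (σ (τ x)) = i)
            (q := fun x => x ∈ Finset.univ.filter fun x => f (σ x) = i)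
            (fun a => by simp)).trans
          (σ.subtypeEquiv (fun a => by simp))))) := by
    rw [restrictSign_eq]
    congr 1
  have h2 : restrictSign (f ∘ σ) τ i =
      Equiv.Perm.sign (permOf (Finset.univ.filter fun x => f (σ (τ x)) = i)
        (Finset.univ.filter fun x => f (σ x) = i) (card_eq (f ∘ σ) τ i)
        (τ.subtypeEquiv (fun a => by simp))) := rfl
  rw [h1, h2, restrictSign_eq, mul_comm]
  exact permOf_sign _ _ _ _ _ _ _ _

end Aux

/-- Composition of a surjection with a permutation. -/
def Surj.comp' {q l : ℕ} (f : Surj q l) (σ : Equiv.Perm (Fin q)) : Surj q l :=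
  ⟨f.1 ∘ σ, f.2.comp σ.surjective⟩

/-- The formula
`[f]·σ = (∏_{1 ≤ i ≤ l} ε(σ|_{(f∘σ)^{-1}(i)})) · [f∘σ]` defines a right action of the
symmetric group `S_q` on the free `𝕜`-module `𝕜[Surj(q,l)]` with basis the surjections
`f : {1,…,q} → {1,…,l}`: there is a family of linear operators given on basis elements by
this formula which satisfies `([f]·σ)·τ = [f]·(στ)` and `[f]·id = [f]`. -/
theorem stmt_7 (𝕜 : Type) [CommRing 𝕜] (q l : ℕ) :
    ∃ act : Equiv.Perm (Fin q) → ((Surj q l →₀ 𝕜) →ₗ[𝕜] (Surj q l →₀ 𝕜)),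
      (∀ (σ : Equiv.Perm (Fin q)) (f : Surj q l),
        act σ (Finsupp.single f 1) =
          ((∏ i : Fin l, restrictSign f.1 σ i : ℤˣ) : ℤ) •
            Finsupp.single (⟨f.1 ∘ σ, f.2.comp σ.surjective⟩ : Surj q l) (1 : 𝕜)) ∧
      (∀ σ τ : Equiv.Perm (Fin q), act (σ * τ) = (act τ).comp (act σ)) ∧
      act 1 = LinearMap.id := by
  refine ⟨fun σ => Finsupp.lsum 𝕜 (fun f =>
      (((∏ i : Fin l, restrictSign f.1 σ i : ℤˣ) : ℤ) : 𝕜) •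
        Finsupp.lsingle (f.comp' σ)), ?_, ?_, ?_⟩
  · intro σ f
    simp [Int.cast_smul_eq_zsmul]
    rfl
  · intro σ τ
    apply Finsupp.lhom_ext
    intro f b
    have hfun : f.comp' (σ * τ) = (f.comp' σ).comp' τ := rfl
    have hc : (∏ i : Fin l, restrictSign f.1 (σ * τ) i : ℤˣ) =
        (∏ i : Fin l, restrictSign f.1 σ i) * ∏ i : Fin l, restrictSign (f.comp' σ).1 τ i := by
      rw [← Finset.prod_mul_distrib]
      exact Finset.prod_congr rfl fun i _ => restrictSign_mul f.1 σ τ i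
    simp only [LinearMap.comp_apply, Finsupp.lsum_single, LinearMap.smul_apply,
      Finsupp.lsingle_apply, Finsupp.smul_single, smul_eq_mul, mul_one, hfun, hc]
    push_cast
    ring_nf
  · apply Finsupp.lhom_ext
    intro f b
    have h1 : f.comp' 1 = f := Subtype.ext rfl
    simp [restrictSign_one, h1]
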